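/- Let X and Y be random variables with values in a finite set S, and let W be another random variable, such that X and Y are conditionally independent given W and (X,W) has the same law as (Y,W). If for every i ∈ S, P(X = i, Y = i) = P(X = i)², then the conditional distribution of X given W equals the unconditional distribution of X almost surely; that is, X is independent of W. -/

import Mathlib

open MeasureTheory ProbabilityTheory

/-- Let `X, Y` take values in a finite set `S` and `W` in a measurable
space `E`, with `X, Y` conditionally independent given `W` and `(X,W) =_d (Y,W)`.
If `P(X = i, Y = i) = P(X = i)²` for every `i ∈ S`, then the conditional distribution
of `X` given `W` equals the unconditional one a.s., i.e. `X` is independent of `W`. -/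
theorem stmt4 {Ω S E : Type*} {mΩ : MeasurableSpace Ω} [StandardBorelSpace Ω]
    [Fintype S] [MeasurableSpace S] [MeasurableSingletonClass S] [MeasurableSpace E]
    (μ : Measure Ω) [IsProbabilityMeasure μ]
    (X Y : Ω → S) (W : Ω → E)
    (hX : Measurable X) (hY : Measurable Y) (hW : Measurable W)
    (hCI : CondIndepFun (MeasurableSpace.comap W inferInstance) (hW.comap_le) X Y μ)
    (hID : IdentDistrib (fun ω => (X ω, W ω)) (fun ω => (Y ω, W ω)) μ μ)
    (hsq : ∀ i : S, μ {ω | X ω = i ∧ Y ω = i} = μ {ω | X ω = i} * μ {ω | X ω = i}) :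
    (∀ i : S,
      μ[(X ⁻¹' {i}).indicator (fun _ => (1 : ℝ)) | MeasurableSpace.comap W inferInstance]
        =ᵐ[μ] fun _ => (μ (X ⁻¹' {i})).toReal) ∧
    IndepFun X W μ := by
  classical
  have hm : MeasurableSpace.comap W inferInstance ≤ mΩ := hW.comap_le
  -- basic integrability of indicators
  have hind_int : ∀ (A : Set Ω), MeasurableSet A →
      Integrable (A.indicator (fun _ => (1 : ℝ))) μ := by
    intro A hA
    exact (integrable_const (1 : ℝ)).indicator hA
  -- identical distribution: measures of A ∩ W⁻¹' t agree
  have hmeas_eq : ∀ (i : S) (t : Set E), MeasurableSet t →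
      μ (X ⁻¹' {i} ∩ W ⁻¹' t) = μ (Y ⁻¹' {i} ∩ W ⁻¹' t) := by
    intro i t ht
    have h := hID.measure_mem_eq (s := {i} ×ˢ t)
      ((measurableSet_singleton i).prod ht)
    rwa [show (fun ω => (X ω, W ω)) ⁻¹' ({i} ×ˢ t) = X ⁻¹' {i} ∩ W ⁻¹' t from
        Set.mk_preimage_prod X W,
      show (fun ω => (Y ω, W ω)) ⁻¹' ({i} ×ˢ t) = Y ⁻¹' {i} ∩ W ⁻¹' t from
        Set.mk_preimage_prod Y W] at h
  -- Main per-i claim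
  have main : ∀ i : S,
      μ[(X ⁻¹' {i}).indicator (fun _ => (1 : ℝ)) | MeasurableSpace.comap W inferInstance]
        =ᵐ[μ] fun _ => (μ (X ⁻¹' {i})).toReal := by
    intro i
    set A : Set Ω := X ⁻¹' {i} with hA_def
    set B : Set Ω := Y ⁻¹' {i} with hB_def
    have hA : MeasurableSet A := hX (measurableSet_singleton i)
    have hB : MeasurableSet B := hY (measurableSet_singleton i)
    set f : Ω → ℝ :=
      μ[A.indicator (fun _ => (1 : ℝ)) | MeasurableSpace.comap W inferInstance] with hf_def
    set c : ℝ := (μ A).toReal with hc_def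
    -- f is also a version of the conditional expectation of 1_B
    have hfB : f =ᵐ[μ]
        μ[B.indicator (fun _ => (1 : ℝ)) | MeasurableSpace.comap W inferInstance] := by
      refine ae_eq_condExp_of_forall_setIntegral_eq hm (hind_int B hB)
        (fun s _ _ => integrable_condExp.integrableOn) ?_
        stronglyMeasurable_condExp.aestronglyMeasurable
      rintro s ⟨t, ht, rfl⟩ -
      rw [hf_def, setIntegral_condExp hm (hind_int A hA) ⟨t, ht, rfl⟩]
      rw [setIntegral_indicator hA, setIntegral_indicator hB]
      simp only [setIntegral_const, smul_eq_mul, mul_one, Measure.real_def]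
      rw [Set.inter_comm (W ⁻¹' t) A, Set.inter_comm (W ⁻¹' t) B, hmeas_eq i t ht]
    -- conditional independence
    have hCI' := (condIndepFun_iff_condExp_inter_preimage_eq_mul (hm' := hm) hX hY).mp hCI
      {i} {i} (measurableSet_singleton i) (measurableSet_singleton i)
    have hprod : μ[(A ∩ B).indicator (fun _ => (1 : ℝ)) | MeasurableSpace.comap W inferInstance]
        =ᵐ[μ] fun ω => f ω * f ω := by
      refine hCI'.trans ?_
      filter_upwards [hfB] with ω hω
      rw [← hω]
    -- f is bounded: 0 ≤ f ≤ 1 a.e.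
    have hf0 : 0 ≤ᵐ[μ] f := condExp_nonneg (Filter.Eventually.of_forall (by
      intro ω; by_cases h : ω ∈ A <;> simp [Set.indicator_apply, h]))
    have hf1 : f ≤ᵐ[μ] fun _ => (1 : ℝ) := by
      have hmono := condExp_mono (μ := μ) (m := MeasurableSpace.comap W inferInstance)
        (hind_int A hA) (integrable_const (1 : ℝ))
        (Filter.Eventually.of_forall (by
          intro ω; by_cases h : ω ∈ A <;> simp [Set.indicator_apply, h]))
      refine hmono.trans ?_
      rw [condExp_const hm]
    have hf_mem : MemLp f 2 μ := by
      refine MemLp.of_bound ((stronglyMeasurable_condExp.mono hm).aestronglyMeasurable) 1 ?_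
      filter_upwards [hf0, hf1] with ω h0 h1
      rw [Real.norm_eq_abs, abs_of_nonneg h0]; exact h1
    have hf_int : Integrable f μ := integrable_condExp
    have hff_int : Integrable (fun ω => f ω * f ω) μ := by
      have := hf_mem.integrable_sq
      simpa [pow_two] using this
    -- ∫ f = c
    have hintf : ∫ ω, f ω ∂μ = c := by
      rw [hf_def, integral_condExp hm, integral_indicator hA]
      simp [hc_def, Measure.real_def]
    -- ∫ f² = c²
    have hintff : ∫ ω, f ω * f ω ∂μ = c * c := by
      have h1 : ∫ ω, f ω * f ω ∂μ = ∫ ω, ((A ∩ B).indicator (fun _ => (1 : ℝ))) ω ∂μ := by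
        rw [← integral_condExp hm (μ := μ) (f := (A ∩ B).indicator (fun _ => (1 : ℝ)))]
        exact integral_congr_ae hprod.symm
      rw [h1, integral_indicator (hA.inter hB)]
      have hAB : A ∩ B = {ω | X ω = i ∧ Y ω = i} := by
        ext ω; simp [hA_def, hB_def]
      simp only [setIntegral_const, smul_eq_mul, mul_one, Measure.real_def, hAB, hsq i]
      rw [ENNReal.toReal_mul]
      have hAX : {ω | X ω = i} = A := by ext ω; simp [hA_def]
      rw [hAX, hc_def]
    -- variance zero
    have hvar : ∫ ω, (f ω - c) ^ 2 ∂μ = 0 := by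
      have hexp : ∀ ω, (f ω - c) ^ 2 = f ω * f ω - (2 * c) * f ω + c * c := by
        intro ω; ring
      have hint1 : Integrable (fun ω => f ω * f ω - 2 * c * f ω) μ :=
        hff_int.sub (hf_int.const_mul (2 * c))
      rw [integral_congr_ae (Filter.Eventually.of_forall hexp),
        integral_add hint1 (integrable_const (c * c)),
        integral_sub hff_int (hf_int.const_mul (2 * c)),
        integral_const_mul, hintf, hintff]
      simp [measure_univ]
      ring
    have hsq_int : Integrable (fun ω => (f ω - c) ^ 2) μ := by
      have hexp : (fun ω => (f ω - c) ^ 2) = fun ω => f ω * f ω - (2 * c) * f ω + c * c := by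
        funext ω; ring
      rw [hexp]
      exact ((hff_int.sub (hf_int.const_mul (2 * c)))).add (integrable_const _)
    have h0 : (fun ω => (f ω - c) ^ 2) =ᵐ[μ] 0 := by
      rw [← integral_eq_zero_iff_of_nonneg (fun ω => sq_nonneg _) hsq_int]
      exact hvar
    filter_upwards [h0] with ω hω
    have h1 : (f ω - c) ^ 2 = 0 := hω
    have h2 := pow_eq_zero_iff (n := 2) (by norm_num) |>.mp h1
    have : f ω = c := by linarith
    exact this
  refine ⟨main, ?_⟩
  -- independence
  rw [indepFun_iff_measure_inter_preimage_eq_mul]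
  intro s t hs ht
  -- per-singleton
  have hsingle : ∀ i : S, μ (X ⁻¹' {i} ∩ W ⁻¹' t) = μ (X ⁻¹' {i}) * μ (W ⁻¹' t) := by
    intro i
    have hA : MeasurableSet (X ⁻¹' {i}) := hX (measurableSet_singleton i)
    have h1 : ∫ ω in W ⁻¹' t,
          (μ[(X ⁻¹' {i}).indicator (fun _ => (1 : ℝ)) |
            MeasurableSpace.comap W inferInstance]) ω ∂μ
        = ∫ ω in W ⁻¹' t, (X ⁻¹' {i}).indicator (fun _ => (1 : ℝ)) ω ∂μ :=
      setIntegral_condExp hm (hind_int _ hA) ⟨t, ht, rfl⟩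
    have h2 : ∫ ω in W ⁻¹' t,
          (μ[(X ⁻¹' {i}).indicator (fun _ => (1 : ℝ)) |
            MeasurableSpace.comap W inferInstance]) ω ∂μ
        = (μ (X ⁻¹' {i})).toReal * (μ (W ⁻¹' t)).toReal := by
      rw [setIntegral_congr_ae (hW ht) ((main i).mono (fun ω hω _ => hω))]
      simp [mul_comm, Measure.real_def]
    have h3 : ∫ ω in W ⁻¹' t, (X ⁻¹' {i}).indicator (fun _ => (1 : ℝ)) ω ∂μ
        = (μ (X ⁻¹' {i} ∩ W ⁻¹' t)).toReal := by
      rw [setIntegral_indicator hA]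
      simp [Set.inter_comm, Measure.real_def]
    have h4 : (μ (X ⁻¹' {i} ∩ W ⁻¹' t)).toReal
        = (μ (X ⁻¹' {i})).toReal * (μ (W ⁻¹' t)).toReal := by
      rw [← h3, ← h1, h2]
    rw [← ENNReal.toReal_mul] at h4
    exact (ENNReal.toReal_eq_toReal_iff' (measure_ne_top μ _)
      (ENNReal.mul_ne_top (measure_ne_top μ _) (measure_ne_top μ _))).mp h4
  -- decompose over i ∈ s
  have hdecomp : ∀ u : Set Ω, MeasurableSet u →
      μ (X ⁻¹' s ∩ u) = ∑ i ∈ s.toFinset, μ (X ⁻¹' {i} ∩ u) := by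
    intro u hu
    have heq : X ⁻¹' s ∩ u = ⋃ i ∈ s.toFinset, (X ⁻¹' {i} ∩ u) := by
      ext ω
      simp only [Set.mem_inter_iff, Set.mem_preimage, Set.mem_iUnion, Set.mem_toFinset,
        Set.mem_singleton_iff]
      constructor
      · rintro ⟨hx, hω⟩; exact ⟨X ω, hx, rfl, hω⟩
      · rintro ⟨j, hj, rfl, hω⟩; exact ⟨hj, hω⟩
    rw [heq, measure_biUnion_finset]
    · intro i _ j _ hij
      refine Set.disjoint_left.mpr ?_
      rintro ω ⟨h1, -⟩ ⟨h2, -⟩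
      exact hij (h1.symm.trans h2)
    · intro i _
      exact (hX (measurableSet_singleton i)).inter hu
  rw [hdecomp (W ⁻¹' t) (hW ht)]
  have hXs : μ (X ⁻¹' s) = ∑ i ∈ s.toFinset, μ (X ⁻¹' {i}) := by
    simpa using hdecomp Set.univ MeasurableSet.univ
  rw [hXs, Finset.sum_mul]
  exact Finset.sum_congr rfl fun i _ => hsingle i
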